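/- arXiv:2211.13739 — 3 statements merged into one kernel-verified Lean document; each statement's English description precedes it below -/
import Mathlib

section
/- Let s ∈ (0,1), r ∈ [0,2], λ₁ > 0 and λ ≥ λ₁. For every complex z with |Im z| ≤ π/2: (i) if Re z ≥ 0 then |λ^{r/2} e^{(1−s)z}/(e^z + λ)| ≤ e^{−(s − r/2) Re z}, and (ii) if Re z ≤ 0 then |λ^{r/2} e^{(1−s)z}/(e^z + λ)| ≤ λ₁^{r/2 − 1} e^{(1−s) Re z}. -/
theorem sinc_integrand_decay (s : ℝ) (hs : s ∈ Set.Ioo (0 : ℝ) 1)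
    (r : ℝ) (hr : r ∈ Set.Icc (0 : ℝ) 2)
    (lam1 : ℝ) (hlam1 : 0 < lam1) (lam : ℝ) (hlam : lam1 ≤ lam)
    (z : ℂ) (hz : |z.im| ≤ Real.pi / 2) :
    (0 ≤ z.re →
      ‖((lam ^ (r / 2) : ℝ) * Complex.exp ((1 - (s : ℂ)) * z) /
          (Complex.exp z + (lam : ℂ)))‖ ≤ Real.exp (-(s - r / 2) * z.re)) ∧
    (z.re ≤ 0 →
      ‖((lam ^ (r / 2) : ℝ) * Complex.exp ((1 - (s : ℂ)) * z) /
          (Complex.exp z + (lam : ℂ)))‖ ≤ lam1 ^ (r / 2 - 1) * Real.exp ((1 - s) * z.re)) := by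
  obtain ⟨hs0, hs1⟩ := hs
  obtain ⟨hr0, hr2⟩ := hr
  set x := z.re with hx
  have hlam0 : (0:ℝ) < lam := lt_of_lt_of_le hlam1 hlam
  have hzim := abs_le.mp hz
  have hcos : 0 ≤ Real.cos z.im :=
    Real.cos_nonneg_of_mem_Icc ⟨by linarith [hzim.1], hzim.2⟩
  have hre : 0 ≤ (Complex.exp z).re := by
    rw [Complex.exp_re]; positivity
  have habs_exp : ‖Complex.exp z‖ = Real.exp x := Complex.norm_exp z
  set M := ‖Complex.exp z + (lam:ℂ)‖ with hM
  have hMpos : 0 < M := by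
    apply norm_pos_iff.mpr
    intro h
    have : (Complex.exp z + (lam:ℂ)).re = 0 := by rw [h]; simp
    simp [Complex.add_re] at this
    linarith [Real.exp_pos x]
  have hM_lam : lam ≤ M := by
    calc lam ≤ (Complex.exp z + (lam:ℂ)).re := by simp [Complex.add_re]; linarith
    _ ≤ |(Complex.exp z + (lam:ℂ)).re| := le_abs_self _
    _ ≤ M := Complex.abs_re_le_norm _
  have hM_exp : Real.exp x ≤ M := by
    have hsq : (Real.exp x)^2 ≤ M^2 := by
      have h1 : (Real.exp x)^2 = (Complex.exp z).re^2 + (Complex.exp z).im^2 := by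
        rw [← habs_exp, Complex.sq_norm, Complex.normSq_apply]; ring
      rw [hM, Complex.sq_norm, Complex.normSq_apply, h1]
      simp only [Complex.add_re, Complex.add_im, Complex.ofReal_re, Complex.ofReal_im]
      nlinarith [hlam0.le, hre]
    nlinarith [Real.exp_pos x, hMpos]
  -- numerator
  have hnum : ‖((lam ^ (r / 2) : ℝ) * Complex.exp ((1 - (s : ℂ)) * z))‖ =
      lam ^ (r / 2) * Real.exp ((1 - s) * x) := by
    rw [norm_mul, Complex.norm_real, Real.norm_eq_abs, Complex.norm_exp]
    congr 1
    · exact abs_of_nonneg (Real.rpow_nonneg hlam0.le _)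
    · congr 1
      simp [Complex.mul_re, Complex.sub_re, Complex.sub_im, hx]
  have hA : ‖((lam ^ (r / 2) : ℝ) * Complex.exp ((1 - (s : ℂ)) * z) /
      (Complex.exp z + (lam : ℂ)))‖ = lam ^ (r / 2) * Real.exp ((1 - s) * x) / M := by
    rw [norm_div, hnum]
  rw [hA]
  constructor
  · intro hx0
    have hMlow : lam ^ (r / 2) * Real.exp ((1 - r/2) * x) ≤ M := by
      have h1 : lam ^ (r/2) ≤ M ^ (r/2) := Real.rpow_le_rpow hlam0.le hM_lam (by linarith)
      have h2 : Real.exp ((1 - r/2) * x) ≤ M ^ (1 - r/2) := by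
        have : Real.exp ((1 - r/2) * x) = (Real.exp x) ^ (1 - r/2) := by
          rw [Real.rpow_def_of_pos (Real.exp_pos x), Real.log_exp]; ring_nf
        rw [this]
        exact Real.rpow_le_rpow (Real.exp_pos x).le hM_exp (by linarith)
      calc lam ^ (r/2) * Real.exp ((1 - r/2) * x) ≤ M ^ (r/2) * M ^ (1 - r/2) := by
            apply mul_le_mul h1 h2 (Real.exp_pos _).le (Real.rpow_nonneg hMpos.le _)
      _ = M := by rw [← Real.rpow_add hMpos]; simp
    rw [div_le_iff₀ hMpos]
    calc lam ^ (r / 2) * Real.exp ((1 - s) * x)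
        = Real.exp (-(s - r / 2) * x) * (lam ^ (r / 2) * Real.exp ((1 - r/2) * x)) := by
          rw [← mul_assoc, mul_comm (Real.exp _) (lam ^ (r/2)), mul_assoc, ← Real.exp_add]
          ring_nf
      _ ≤ Real.exp (-(s - r / 2) * x) * M := by
          exact mul_le_mul_of_nonneg_left hMlow (Real.exp_pos _).le
  · intro hx0
    have h1 : lam ^ (r / 2) / M ≤ lam1 ^ (r/2 - 1) := by
      have h2 : lam ^ (r / 2) / M ≤ lam ^ (r / 2) / lam :=
        div_le_div_of_nonneg_left (Real.rpow_nonneg hlam0.le _) hlam0 hM_lam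
      have h3 : lam ^ (r / 2) / lam = lam ^ (r/2 - 1) := by
        rw [Real.rpow_sub hlam0, Real.rpow_one]
      have h4 : lam ^ (r/2 - 1) ≤ lam1 ^ (r/2 - 1) :=
        Real.rpow_le_rpow_of_nonpos hlam1 hlam (by linarith)
      linarith
    calc lam ^ (r / 2) * Real.exp ((1 - s) * x) / M
        = (lam ^ (r / 2) / M) * Real.exp ((1 - s) * x) := by ring
      _ ≤ lam1 ^ (r/2 - 1) * Real.exp ((1 - s) * x) :=
          mul_le_mul_of_nonneg_right h1 (Real.exp_pos _).le
end

section
/- Let s ∈ (0,1) and k > 0. For s ∈ (0,1), k > 0, and nonnegative integers 𝙼, 𝙽, define the sinc quadrature Q_k^{-s}(λ) := (k·sin(πs)/π) · ∑_{l=−𝙼}^{𝙽} e^{(1−s)kl}/(e^{kl} + λ) for λ > 0. Then for every λ > 0 and all nonnegative integers 𝙼, 𝙽, one has Q_k^{-s}(λ) ≤ (1 + 2k·sin(πs)/π) · λ^{−s}. -/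
open Real MeasureTheory intervalIntegral Set

/-- Sum compared with integral for a monotone function, integer steps. -/
lemma sum_le_integral_of_monotoneOn {φ : ℝ → ℝ} (hc : Continuous φ) {a b : ℤ} (hab : a ≤ b)
    (h : MonotoneOn φ (Set.Icc (a : ℝ) ((b : ℝ) + 1))) :
    ∑ l ∈ Finset.Icc a b, φ (l : ℝ) ≤ ∫ x in (a : ℝ)..((b : ℝ) + 1), φ x := by
  refine Int.le_induction (motive := fun n _ => MonotoneOn φ (Set.Icc (a : ℝ) ((n : ℝ) + 1)) →
      ∑ l ∈ Finset.Icc a n, φ (l : ℝ) ≤ ∫ x in (a : ℝ)..((n : ℝ) + 1), φ x) ?_ ?_ b hab h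
  · intro h
    simp only [Finset.Icc_self, Finset.sum_singleton]
    have h1 : φ (a : ℝ) ≤ ∫ x in (a : ℝ)..((a : ℝ) + 1), φ ((a : ℝ)) := by
      rw [intervalIntegral.integral_const, smul_eq_mul]
      have e : ((a : ℝ) + 1 - (a : ℝ)) = 1 := by ring
      rw [e, one_mul]
    refine h1.trans (intervalIntegral.integral_mono_on (by linarith)
      intervalIntegrable_const (hc.intervalIntegrable _ _) ?_)
    intro x hx
    exact h ⟨le_refl _, by linarith⟩ hx hx.1
  · intro b hab IH h
    have hsplit : Finset.Icc a (b + 1) = insert (b + 1) (Finset.Icc a b) := by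
      ext x; simp only [Finset.mem_Icc, Finset.mem_insert]; omega
    have hnot : (b + 1) ∉ Finset.Icc a b := by simp
    rw [hsplit, Finset.sum_insert hnot]
    have hsub : Set.Icc (a : ℝ) ((b : ℝ) + 1) ⊆ Set.Icc (a : ℝ) (((b + 1 : ℤ) : ℝ) + 1) := by
      apply Set.Icc_subset_Icc_right; push_cast; linarith
    have IH' := IH (h.mono hsub)
    have hstep : φ (((b + 1 : ℤ) : ℝ)) ≤ ∫ x in ((b : ℝ) + 1)..((b : ℝ) + 2), φ x := by
      have h1 : φ (((b + 1 : ℤ) : ℝ)) ≤ ∫ x in ((b : ℝ) + 1)..((b : ℝ) + 2), φ ((b : ℝ) + 1) := by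
        rw [intervalIntegral.integral_const, smul_eq_mul]
        have e : ((b : ℝ) + 2 - ((b : ℝ) + 1)) = 1 := by ring
        rw [e, one_mul]
        have e2 : ((b + 1 : ℤ) : ℝ) = (b : ℝ) + 1 := by push_cast; ring
        rw [e2]
      refine h1.trans (intervalIntegral.integral_mono_on (by linarith)
        intervalIntegrable_const (hc.intervalIntegrable _ _) ?_)
      intro x hx
      have hba : (a : ℝ) ≤ (b : ℝ) + 1 := by exact_mod_cast (by omega : a ≤ b + 1)
      refine h ⟨hba, by push_cast; linarith⟩ ⟨by linarith [hx.1], by push_cast; linarith [hx.2]⟩ hx.1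
    have hadj : (∫ x in (a : ℝ)..((b : ℝ) + 1), φ x) + ∫ x in ((b : ℝ) + 1)..((b : ℝ) + 2), φ x
        = ∫ x in (a : ℝ)..((b : ℝ) + 2), φ x :=
      intervalIntegral.integral_add_adjacent_intervals (hc.intervalIntegrable _ _)
        (hc.intervalIntegrable _ _)
    have e3 : ((b + 1 : ℤ) : ℝ) + 1 = (b : ℝ) + 2 := by push_cast; ring
    rw [e3]
    linarith

/-- Sum compared with integral for an antitone function, integer steps. -/
lemma sum_le_integral_of_antitoneOn {φ : ℝ → ℝ} (hc : Continuous φ) {a b : ℤ} (hab : a ≤ b)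
    (h : AntitoneOn φ (Set.Icc ((a : ℝ) - 1) (b : ℝ))) :
    ∑ l ∈ Finset.Icc a b, φ (l : ℝ) ≤ ∫ x in ((a : ℝ) - 1)..(b : ℝ), φ x := by
  refine Int.le_induction (motive := fun n _ => AntitoneOn φ (Set.Icc ((a : ℝ) - 1) (n : ℝ)) →
      ∑ l ∈ Finset.Icc a n, φ (l : ℝ) ≤ ∫ x in ((a : ℝ) - 1)..(n : ℝ), φ x) ?_ ?_ b hab h
  · intro h
    simp only [Finset.Icc_self, Finset.sum_singleton]
    have h1 : φ (a : ℝ) ≤ ∫ x in ((a : ℝ) - 1)..(a : ℝ), φ ((a : ℝ)) := by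
      rw [intervalIntegral.integral_const, smul_eq_mul]
      have e : ((a : ℝ) - ((a : ℝ) - 1)) = 1 := by ring
      rw [e, one_mul]
    refine h1.trans (intervalIntegral.integral_mono_on (by linarith)
      intervalIntegrable_const (hc.intervalIntegrable _ _) ?_)
    intro x hx
    exact h hx ⟨by linarith, le_refl _⟩ hx.2
  · intro b hab IH h
    have hsplit : Finset.Icc a (b + 1) = insert (b + 1) (Finset.Icc a b) := by
      ext x; simp only [Finset.mem_Icc, Finset.mem_insert]; omega
    have hnot : (b + 1) ∉ Finset.Icc a b := by simp
    rw [hsplit, Finset.sum_insert hnot]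
    have hsub : Set.Icc ((a : ℝ) - 1) (b : ℝ) ⊆ Set.Icc ((a : ℝ) - 1) ((b + 1 : ℤ) : ℝ) := by
      apply Set.Icc_subset_Icc_right; push_cast; linarith
    have IH' := IH (h.mono hsub)
    have hstep : φ (((b + 1 : ℤ) : ℝ)) ≤ ∫ x in (b : ℝ)..((b : ℝ) + 1), φ x := by
      have h1 : φ (((b + 1 : ℤ) : ℝ)) ≤ ∫ x in (b : ℝ)..((b : ℝ) + 1), φ ((b : ℝ) + 1) := by
        rw [intervalIntegral.integral_const, smul_eq_mul]
        have e : ((b : ℝ) + 1 - (b : ℝ)) = 1 := by ring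
        rw [e, one_mul]
        have e2 : ((b + 1 : ℤ) : ℝ) = (b : ℝ) + 1 := by push_cast; ring
        rw [e2]
      refine h1.trans (intervalIntegral.integral_mono_on (by linarith)
        intervalIntegrable_const (hc.intervalIntegrable _ _) ?_)
      intro x hx
      have hba : (a : ℝ) ≤ (b : ℝ) := by exact_mod_cast hab
      refine h ⟨by linarith [hx.1], by push_cast; linarith [hx.2]⟩
        ⟨by push_cast; linarith, by push_cast; linarith⟩ ?_
      push_cast
      linarith [hx.2]
    have hadj : (∫ x in ((a : ℝ) - 1)..(b : ℝ), φ x) + ∫ x in (b : ℝ)..((b : ℝ) + 1), φ x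
        = ∫ x in ((a : ℝ) - 1)..((b : ℝ) + 1), φ x :=
      intervalIntegral.integral_add_adjacent_intervals (hc.intervalIntegrable _ _)
        (hc.intervalIntegrable _ _)
    have e3 : ((b + 1 : ℤ) : ℝ) = (b : ℝ) + 1 := by push_cast; ring
    rw [e3] at hstep ⊢
    linarith

/-- Value of the Beta-type integral. -/
lemma beta_integral_value {s : ℝ} (hs0 : 0 < s) (hs1 : s < 1) :
    ∫ x in (0 : ℝ)..1, x ^ (-s) * (1 - x) ^ (s - 1) = Real.pi / Real.sin (Real.pi * s) := by
  have hpt : ∀ x ∈ Set.uIcc (0 : ℝ) 1,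
      (x : ℂ) ^ ((1 - (s : ℂ)) - 1) * (1 - (x : ℂ)) ^ ((s : ℂ) - 1)
        = ((x ^ (-s) * (1 - x) ^ (s - 1) : ℝ) : ℂ) := by
    intro x hx
    rw [Set.uIcc_of_le (by norm_num : (0:ℝ) ≤ 1)] at hx
    have hx0 : (0 : ℝ) ≤ x := hx.1
    have hx1 : (0 : ℝ) ≤ 1 - x := by linarith [hx.2]
    have e1 : ((1 : ℂ) - (s : ℂ)) - 1 = ((-s : ℝ) : ℂ) := by push_cast; ring
    have e2 : ((s : ℂ)) - 1 = ((s - 1 : ℝ) : ℂ) := by push_cast; ring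
    have e3 : (1 : ℂ) - (x : ℂ) = ((1 - x : ℝ) : ℂ) := by push_cast; ring
    rw [e1, e3, e2, ← Complex.ofReal_cpow hx0, ← Complex.ofReal_cpow hx1, ← Complex.ofReal_mul]
  have hbeta : Complex.betaIntegral (1 - (s : ℂ)) (s : ℂ)
      = ((∫ x in (0 : ℝ)..1, x ^ (-s) * (1 - x) ^ (s - 1) : ℝ) : ℂ) := by
    rw [Complex.betaIntegral]
    rw [intervalIntegral.integral_congr hpt]
    exact intervalIntegral.integral_ofReal
  have hGamma : Complex.Gamma (1 - (s : ℂ)) * Complex.Gamma (s : ℂ)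
      = Complex.betaIntegral (1 - (s : ℂ)) (s : ℂ) := by
    have h := Complex.Gamma_mul_Gamma_eq_betaIntegral
      (s := 1 - (s : ℂ)) (t := (s : ℂ)) (by simp [Complex.sub_re]; linarith) (by simpa using hs0)
    rwa [show (1 : ℂ) - (s : ℂ) + s = 1 by ring, Complex.Gamma_one, one_mul] at h
  have hrefl : Complex.Gamma (s : ℂ) * Complex.Gamma (1 - (s : ℂ))
      = (Real.pi : ℂ) / Complex.sin ((Real.pi : ℂ) * s) := Complex.Gamma_mul_Gamma_one_sub s
  have : ((∫ x in (0 : ℝ)..1, x ^ (-s) * (1 - x) ^ (s - 1) : ℝ) : ℂ)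
      = ((Real.pi / Real.sin (Real.pi * s) : ℝ) : ℂ) := by
    rw [← hbeta, ← hGamma, mul_comm, hrefl]
    push_cast [Complex.ofReal_sin]
    norm_num
  exact_mod_cast this

/-- Integrability of the Beta-type integrand. -/
lemma beta_integrable {s : ℝ} (hs0 : 0 < s) (hs1 : s < 1) :
    IntervalIntegrable (fun x : ℝ => x ^ (-s) * (1 - x) ^ (s - 1)) volume 0 1 := by
  have hconv := Complex.betaIntegral_convergent (u := 1 - (s : ℂ)) (v := (s : ℂ))
    (by simp [Complex.sub_re]; linarith) (by simpa using hs0)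
  rw [intervalIntegrable_iff_integrableOn_Ioc_of_le (by norm_num : (0:ℝ) ≤ 1)]
  rw [intervalIntegrable_iff_integrableOn_Ioc_of_le (by norm_num : (0:ℝ) ≤ 1)] at hconv
  have hre := hconv.re
  refine MeasureTheory.IntegrableOn.congr_fun_ae hre ?_
  filter_upwards [MeasureTheory.ae_restrict_mem measurableSet_Ioc] with x hx
  have hx0 : (0 : ℝ) ≤ x := le_of_lt hx.1
  have hx1 : (0 : ℝ) ≤ 1 - x := by linarith [hx.2]
  have e1 : ((1 : ℂ) - (s : ℂ)) - 1 = ((-s : ℝ) : ℂ) := by push_cast; ring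
  have e2 : ((s : ℂ)) - 1 = ((s - 1 : ℝ) : ℂ) := by push_cast; ring
  have e3 : (1 : ℂ) - (x : ℂ) = ((1 - x : ℝ) : ℂ) := by push_cast; ring
  show ((x : ℂ) ^ ((1 - (s : ℂ)) - 1) * (1 - (x : ℂ)) ^ ((s : ℂ) - 1)).re
      = x ^ (-s) * (1 - x) ^ (s - 1)
  rw [e1, e3, e2, ← Complex.ofReal_cpow hx0, ← Complex.ofReal_cpow hx1, ← Complex.ofReal_mul,
    Complex.ofReal_re]

section phi
variable {s k lam : ℝ}

lemma phi_eq_inv (hk : 0 < k) (hlam : 0 < lam) (t : ℝ) :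
    Real.exp ((1 - s) * (k * t)) / (Real.exp (k * t) + lam)
      = (Real.exp (s * k * t) + lam * Real.exp ((s - 1) * k * t))⁻¹ := by
  have hden : (0:ℝ) < Real.exp (k * t) + lam := by positivity
  have hd : (0:ℝ) < Real.exp (s * k * t) + lam * Real.exp ((s - 1) * k * t) := by positivity
  have e1 : Real.exp ((1 - s) * (k * t)) * Real.exp (s * k * t) = Real.exp (k * t) := by
    rw [← Real.exp_add]; congr 1; ring
  have e2 : Real.exp ((1 - s) * (k * t)) * Real.exp ((s - 1) * k * t) = 1 := by
    rw [← Real.exp_add, show (1 - s) * (k * t) + (s - 1) * k * t = 0 by ring, Real.exp_zero]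
  rw [← one_div, div_eq_div_iff hden.ne' hd.ne']
  linear_combination e1 + lam * e2

lemma phi_le_rpow (hs0 : 0 < s) (hs1 : s < 1) (hk : 0 < k) (hlam : 0 < lam) (t : ℝ) :
    Real.exp ((1 - s) * (k * t)) / (Real.exp (k * t) + lam) ≤ lam ^ (-s) := by
  by_cases hcase : Real.exp (k * t) ≤ lam
  · have h1 : Real.exp ((1 - s) * (k * t)) ≤ lam ^ (1 - s) := by
      rw [show (1 - s) * (k * t) = (k * t) * (1 - s) by ring, Real.exp_mul]
      exact Real.rpow_le_rpow (Real.exp_pos _).le hcase (by linarith)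
    have h2 : Real.exp ((1 - s) * (k * t)) / (Real.exp (k * t) + lam)
        ≤ lam ^ (1 - s) / lam := by
      gcongr
      linarith [Real.exp_pos (k * t)]
    have h3 : lam ^ (1 - s) / lam = lam ^ (-s) := by
      rw [show (-s) = (1 - s) + (-1) by ring, Real.rpow_add hlam, Real.rpow_neg_one,
        div_eq_mul_inv]
    linarith
  · have hlamE : lam ≤ Real.exp (k * t) := le_of_not_ge hcase
    have h1 : Real.exp ((1 - s) * (k * t)) / (Real.exp (k * t) + lam)
        ≤ Real.exp ((1 - s) * (k * t)) / Real.exp (k * t) := by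
      gcongr
      linarith
    have h2 : Real.exp ((1 - s) * (k * t)) / Real.exp (k * t) = Real.exp (k * t) ^ (-s) := by
      rw [← Real.exp_sub, show (1 - s) * (k * t) - k * t = (k * t) * (-s) by ring, Real.exp_mul]
    have h3 : Real.exp (k * t) ^ (-s) ≤ lam ^ (-s) :=
      Real.rpow_le_rpow_of_nonpos hlam hlamE (by linarith)
    linarith

lemma d_hasDeriv (t : ℝ) :
    HasDerivAt (fun y : ℝ => Real.exp (s * k * y) + lam * Real.exp ((s - 1) * k * y))
      (Real.exp (s * k * t) * (s * k) + lam * (Real.exp ((s - 1) * k * t) * ((s - 1) * k))) t := by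
  have h1 : HasDerivAt (fun y : ℝ => s * k * y) (s * k) t := by
    simpa using (hasDerivAt_id t).const_mul (s * k)
  have h2 : HasDerivAt (fun y : ℝ => (s - 1) * k * y) ((s - 1) * k) t := by
    simpa using (hasDerivAt_id t).const_mul ((s - 1) * k)
  exact (h1.exp).add ((h2.exp).const_mul lam)

lemma phi_antitoneOn (hs0 : 0 < s) (hs1 : s < 1) (hk : 0 < k) (hlam : 0 < lam) :
    AntitoneOn (fun t => Real.exp ((1 - s) * (k * t)) / (Real.exp (k * t) + lam))
      (Set.Ici (Real.log ((1 - s) * lam / s) / k)) := by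
  set t0 := Real.log ((1 - s) * lam / s) / k with ht0
  set d : ℝ → ℝ := fun y => Real.exp (s * k * y) + lam * Real.exp ((s - 1) * k * y) with hdd
  have hc : (0:ℝ) < (1 - s) * lam / s := div_pos (mul_pos (by linarith) hlam) hs0
  have hdmono : MonotoneOn d (Set.Ici t0) := by
    apply monotoneOn_of_deriv_nonneg (convex_Ici t0)
    · exact (Continuous.add (Real.continuous_exp.comp (by continuity))
        (continuous_const.mul (Real.continuous_exp.comp (by continuity)))).continuousOn
    · intro x hx
      exact ((d_hasDeriv (s := s) (k := k) (lam := lam) x).differentiableAt).differentiableWithinAt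
    · intro x hx
      rw [interior_Ici] at hx
      rw [(d_hasDeriv (s := s) (k := k) (lam := lam) x).deriv]
      have hE : (1 - s) * lam / s ≤ Real.exp (k * x) := by
        rw [← Real.exp_log hc]
        apply Real.exp_le_exp.mpr
        have : t0 ≤ x := le_of_lt hx
        calc Real.log ((1 - s) * lam / s) = k * t0 := by
              rw [ht0]; field_simp
          _ ≤ k * x := by nlinarith
      have key : 0 ≤ s * Real.exp (k * x) - (1 - s) * lam := by
        have := (div_le_iff₀ hs0).1 hE
        nlinarith
      have hsplit : s * k * x = (s - 1) * k * x + k * x := by ring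
      rw [hsplit, Real.exp_add]
      have hprod : 0 ≤ k * Real.exp ((s - 1) * k * x) * (s * Real.exp (k * x) - (1 - s) * lam) :=
        mul_nonneg (mul_nonneg hk.le (Real.exp_pos _).le) key
      nlinarith [Real.exp_pos ((s - 1) * k * x), Real.exp_pos (k * x)]
  intro x hx y hy hxy
  simp only
  rw [phi_eq_inv hk hlam, phi_eq_inv hk hlam]
  have hdx : (0:ℝ) < d x := by simp only [hdd]; positivity
  exact inv_anti₀ hdx (hdmono hx hy hxy)

lemma phi_monotoneOn (hs0 : 0 < s) (hs1 : s < 1) (hk : 0 < k) (hlam : 0 < lam) :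
    MonotoneOn (fun t => Real.exp ((1 - s) * (k * t)) / (Real.exp (k * t) + lam))
      (Set.Iic (Real.log ((1 - s) * lam / s) / k)) := by
  set t0 := Real.log ((1 - s) * lam / s) / k with ht0
  set d : ℝ → ℝ := fun y => Real.exp (s * k * y) + lam * Real.exp ((s - 1) * k * y) with hdd
  have hc : (0:ℝ) < (1 - s) * lam / s := div_pos (mul_pos (by linarith) hlam) hs0
  have hdanti : AntitoneOn d (Set.Iic t0) := by
    apply antitoneOn_of_deriv_nonpos (convex_Iic t0)
    · exact (Continuous.add (Real.continuous_exp.comp (by continuity))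
        (continuous_const.mul (Real.continuous_exp.comp (by continuity)))).continuousOn
    · intro x hx
      exact ((d_hasDeriv (s := s) (k := k) (lam := lam) x).differentiableAt).differentiableWithinAt
    · intro x hx
      rw [interior_Iic] at hx
      rw [(d_hasDeriv (s := s) (k := k) (lam := lam) x).deriv]
      have hE : Real.exp (k * x) ≤ (1 - s) * lam / s := by
        rw [← Real.exp_log hc]
        apply Real.exp_le_exp.mpr
        have : x ≤ t0 := le_of_lt hx
        calc k * x ≤ k * t0 := by nlinarith
          _ = Real.log ((1 - s) * lam / s) := by rw [ht0]; field_simp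
      have key : s * Real.exp (k * x) - (1 - s) * lam ≤ 0 := by
        have := (le_div_iff₀ hs0).1 hE
        nlinarith [hE, hs0]
      have hsplit : s * k * x = (s - 1) * k * x + k * x := by ring
      rw [hsplit, Real.exp_add]
      have hprod : k * Real.exp ((s - 1) * k * x) * (s * Real.exp (k * x) - (1 - s) * lam) ≤ 0 :=
        mul_nonpos_of_nonneg_of_nonpos (mul_nonneg hk.le (Real.exp_pos _).le) key
      nlinarith [Real.exp_pos ((s - 1) * k * x), Real.exp_pos (k * x)]
  intro x hx y hy hxy
  simp only
  rw [phi_eq_inv hk hlam, phi_eq_inv hk hlam]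
  have hdy : (0:ℝ) < d y := by simp only [hdd]; positivity
  exact inv_anti₀ hdy (hdanti hx hy hxy)

lemma phi_continuous (hk : 0 < k) (hlam : 0 < lam) :
    Continuous (fun t => Real.exp ((1 - s) * (k * t)) / (Real.exp (k * t) + lam)) := by
  apply Continuous.div
  · exact Real.continuous_exp.comp (by continuity)
  · exact (Real.continuous_exp.comp (by continuity)).add continuous_const
  · intro t
    positivity

end phi

set_option linter.unusedTactic false in
set_option linter.unreachableTactic false in
lemma cov_pointwise {s k lam E : ℝ} (hlam : 0 < lam) (hE : 0 < E) :
    k * lam * E / (E + lam) ^ 2 * ((E / (E + lam)) ^ (-s) * ((1 - E / (E + lam)) ^ (s - 1)))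
      = k * lam ^ s * (E ^ (1 - s) / (E + lam)) := by
  have hD : (0:ℝ) < E + lam := by positivity
  have r1 : (E/(E+lam))^(-s) = E^(-s) * ((E+lam)^(-s))⁻¹ := by
    rw [Real.div_rpow hE.le hD.le, div_eq_mul_inv]
  have r2 : (1 : ℝ) - E/(E+lam) = lam/(E+lam) := by field_simp; ring
  have r3 : (lam/(E+lam))^(s-1) = lam^(s-1) * ((E+lam)^(s-1))⁻¹ := by
    rw [Real.div_rpow hlam.le hD.le, div_eq_mul_inv]
  have r4 : ((E+lam)^(-s))⁻¹ = (E+lam)^s := by rw [Real.rpow_neg hD.le, inv_inv]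
  have r5 : ((E+lam)^(s-1))⁻¹ = (E+lam)^(1-s) := by
    rw [show (s-1 : ℝ) = -(1-s) by ring, Real.rpow_neg hD.le, inv_inv]
  have r6 : (E+lam)^s * (E+lam)^(1-s) = E + lam := by
    rw [← Real.rpow_add hD, show s + (1-s) = (1:ℝ) by ring, Real.rpow_one]
  have r7 : lam * lam ^ (s - 1) = lam ^ s := by
    have h := Real.rpow_add hlam 1 (s-1)
    rw [Real.rpow_one] at h
    rw [← h]; congr 1 <;> ring
  have r8 : E * E ^ (-s) = E ^ (1 - s) := by
    have h := Real.rpow_add hE 1 (-s)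
    rw [Real.rpow_one] at h
    rw [← h]; congr 1 <;> ring
  rw [r1, r2, r3, r4, r5, ← r7, ← r8]
  field_simp
  linear_combination k * r6

lemma integral_phi_le {s k lam : ℝ} (hs0 : 0 < s) (hs1 : s < 1) (hk : 0 < k) (hlam : 0 < lam)
    {A B : ℝ} (hAB : A ≤ B) :
    ∫ t in A..B, Real.exp ((1 - s) * (k * t)) / (Real.exp (k * t) + lam)
      ≤ Real.pi / Real.sin (Real.pi * s) * lam ^ (-s) / k := by
  set u : ℝ → ℝ := fun t => Real.exp (k * t) / (Real.exp (k * t) + lam) with hu_def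
  set g : ℝ → ℝ := fun x => x ^ (-s) * (1 - x) ^ (s - 1) with hg_def
  have hDpos : ∀ t : ℝ, (0:ℝ) < Real.exp (k * t) + lam := fun t => by positivity
  have hu : ∀ t ∈ Set.uIcc A B,
      HasDerivAt u (k * lam * Real.exp (k * t) / (Real.exp (k * t) + lam) ^ 2) t := by
    intro t _
    have h1 : HasDerivAt (fun y : ℝ => k * y) k t := by simpa using (hasDerivAt_id t).const_mul k
    have he := h1.exp
    have hdiv := he.div (he.add_const lam) (hDpos t).ne'
    exact (hdiv : HasDerivAt (fun y : ℝ => Real.exp (k * y) / (Real.exp (k * y) + lam)) _ t).congr_deriv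
      (by ring)
  have hu' : ContinuousOn (fun t => k * lam * Real.exp (k * t) / (Real.exp (k * t) + lam) ^ 2)
      (Set.uIcc A B) := by
    apply Continuous.continuousOn
    apply Continuous.div
    · exact continuous_const.mul (Real.continuous_exp.comp (by continuity))
    · exact ((Real.continuous_exp.comp (by continuity)).add continuous_const).pow 2
    · intro t
      positivity
  have hu_mem : ∀ t : ℝ, 0 < u t ∧ u t < 1 := by
    intro t
    constructor
    · exact div_pos (Real.exp_pos _) (hDpos t)
    · rw [div_lt_one (hDpos t)]
      linarith [Real.exp_pos (k * t)]
  have hg : ContinuousOn g (u '' Set.uIcc A B) := by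
    rintro x ⟨t, -, rfl⟩
    have h0 := (hu_mem t).1
    have h1 := (hu_mem t).2
    apply ContinuousAt.continuousWithinAt
    apply ContinuousAt.mul
    · exact Real.continuousAt_rpow_const _ _ (Or.inl h0.ne')
    · exact (Real.continuousAt_rpow_const _ _ (Or.inl (by linarith : (1:ℝ) - u t ≠ 0))).comp
        ((continuous_const.sub continuous_id).continuousAt)
  have key : (∫ t in A..B, (k * lam * Real.exp (k * t) / (Real.exp (k * t) + lam) ^ 2) • (g ∘ u) t)
      = ∫ x in u A..u B, g x := intervalIntegral.integral_comp_smul_deriv' hu hu' hg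
  have hptw : ∀ t : ℝ, (k * lam * Real.exp (k * t) / (Real.exp (k * t) + lam) ^ 2) • (g ∘ u) t
      = (k * lam ^ s) * (Real.exp ((1 - s) * (k * t)) / (Real.exp (k * t) + lam)) := by
    intro t
    have hE := Real.exp_pos (k * t)
    have hexp : Real.exp ((1 - s) * (k * t)) = Real.exp (k * t) ^ (1 - s) := by
      rw [show (1 - s) * (k * t) = (k * t) * (1 - s) by ring, Real.exp_mul]
    rw [smul_eq_mul, Function.comp_apply, hexp, hg_def, hu_def]
    exact cov_pointwise hlam hE
  have hinv : lam ^ (-s) * lam ^ s = 1 := by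
    rw [← Real.rpow_add hlam]; norm_num
  have trans : (∫ t in A..B, Real.exp ((1 - s) * (k * t)) / (Real.exp (k * t) + lam))
      = lam ^ (-s) / k * ∫ x in u A..u B, g x := by
    rw [← key]
    rw [← intervalIntegral.integral_const_mul]
    apply intervalIntegral.integral_congr
    intro t _
    simp only [hptw]
    calc Real.exp ((1 - s) * (k * t)) / (Real.exp (k * t) + lam)
        = (lam ^ (-s) * lam ^ s) * (Real.exp ((1 - s) * (k * t)) / (Real.exp (k * t) + lam)) := by
          rw [hinv, one_mul]
      _ = lam ^ (-s) / k * (k * lam ^ s * (Real.exp ((1 - s) * (k * t)) / (Real.exp (k * t) + lam))) := by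
          field_simp
  rw [trans]
  have hgnonneg : 0 ≤ᵐ[MeasureTheory.volume.restrict (Set.Ioc (0:ℝ) 1)] g := by
    filter_upwards [MeasureTheory.ae_restrict_mem measurableSet_Ioc] with x hx
    exact mul_nonneg (Real.rpow_nonneg hx.1.le _) (Real.rpow_nonneg (by linarith [hx.2] : (0:ℝ) ≤ 1 - x) _)
  have huAB : u A ≤ u B := by
    rw [div_le_div_iff₀ (hDpos A) (hDpos B)]
    have := Real.exp_le_exp.mpr (mul_le_mul_of_nonneg_left hAB hk.le)
    nlinarith [Real.exp_pos (k * A), Real.exp_pos (k * B), hlam]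
  have hbound : (∫ x in u A..u B, g x) ≤ Real.pi / Real.sin (Real.pi * s) := by
    have h := intervalIntegral.integral_mono_interval (le_of_lt (hu_mem A).1) huAB
      (le_of_lt (hu_mem B).2) hgnonneg (beta_integrable hs0 hs1)
    calc (∫ x in u A..u B, g x) ≤ ∫ x in (0:ℝ)..1, g x := h
      _ = Real.pi / Real.sin (Real.pi * s) := beta_integral_value hs0 hs1
  have hpos : (0:ℝ) ≤ lam ^ (-s) / k := by positivity
  calc lam ^ (-s) / k * ∫ x in u A..u B, g x
      ≤ lam ^ (-s) / k * (Real.pi / Real.sin (Real.pi * s)) :=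
        mul_le_mul_of_nonneg_left hbound hpos
    _ = Real.pi / Real.sin (Real.pi * s) * lam ^ (-s) / k := by ring

theorem sinc_quadrature_stability (s : ℝ) (hs : s ∈ Set.Ioo (0 : ℝ) 1)
    (k : ℝ) (hk : 0 < k) (M N : ℕ) (lam : ℝ) (hlam : 0 < lam) :
    (k * Real.sin (Real.pi * s) / Real.pi) *
        ∑ l ∈ Finset.Icc (-(M : ℤ)) (N : ℤ),
          Real.exp ((1 - s) * (k * (l : ℝ))) / (Real.exp (k * (l : ℝ)) + lam)
      ≤ (1 + 2 * k * Real.sin (Real.pi * s) / Real.pi) * lam ^ (-s) := by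
  obtain ⟨hs0, hs1⟩ := hs
  set φ : ℝ → ℝ := fun t => Real.exp ((1 - s) * (k * t)) / (Real.exp (k * t) + lam) with hφ
  have hφc : Continuous φ := phi_continuous hk hlam
  have hφ0 : ∀ t, 0 ≤ φ t := fun t => by
    rw [hφ]; positivity
  have hφle : ∀ t, φ t ≤ lam ^ (-s) := fun t => phi_le_rpow hs0 hs1 hk hlam t
  set t0 : ℝ := Real.log ((1 - s) * lam / s) / k with ht0
  set c : ℤ := ⌊t0⌋ with hc
  have hct0 : (c : ℝ) ≤ t0 := Int.floor_le t0
  have ht0c : t0 ≤ (c : ℝ) + 1 := le_of_lt (Int.lt_floor_add_one t0)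
  set a : ℤ := -(M : ℤ) with ha
  set b : ℤ := (N : ℤ) with hb
  set L : ℝ := min ((a : ℝ) - 1) (c : ℝ) with hL
  set R : ℝ := max ((b : ℝ) + 1) ((c : ℝ) + 1) with hR
  have hLc : L ≤ (c : ℝ) := min_le_right _ _
  have hcR : (c : ℝ) + 1 ≤ R := le_max_right _ _
  -- split the sum
  set S1 : Finset ℤ := Finset.Icc a (min b (c - 1)) with hS1
  set S2 : Finset ℤ := Finset.Icc (max a c) (min b (c + 1)) with hS2
  set S3 : Finset ℤ := Finset.Icc (max a (c + 2)) b with hS3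
  have hunion : Finset.Icc a b = S1 ∪ S2 ∪ S3 := by
    ext x
    simp only [hS1, hS2, hS3, Finset.mem_Icc, Finset.mem_union]
    omega
  have hd12 : Disjoint S1 S2 := by
    rw [Finset.disjoint_left]
    intro x hx hx2
    simp only [hS1, hS2, Finset.mem_Icc] at hx hx2
    omega
  have hd123 : Disjoint (S1 ∪ S2) S3 := by
    rw [Finset.disjoint_left]
    intro x hx hx3
    simp only [hS1, hS2, hS3, Finset.mem_Icc, Finset.mem_union] at hx hx3
    omega
  have hsum_eq : ∑ l ∈ Finset.Icc a b, φ (l : ℝ)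
      = (∑ l ∈ S1, φ (l : ℝ)) + (∑ l ∈ S2, φ (l : ℝ)) + ∑ l ∈ S3, φ (l : ℝ) := by
    rw [hunion, Finset.sum_union hd123, Finset.sum_union hd12]
  -- chunk 2
  have hb2 : (∑ l ∈ S2, φ (l : ℝ)) ≤ 2 * lam ^ (-s) := by
    have hcard : (S2.card : ℝ) ≤ 2 := by
      have : S2.card ≤ 2 := by
        rw [hS2, Int.card_Icc]
        omega
      exact_mod_cast this
    calc (∑ l ∈ S2, φ (l : ℝ)) ≤ ∑ _l ∈ S2, lam ^ (-s) :=
          Finset.sum_le_sum fun l _ => hφle _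
      _ = (S2.card : ℝ) * lam ^ (-s) := by rw [Finset.sum_const, nsmul_eq_mul]
      _ ≤ 2 * lam ^ (-s) := by
          apply mul_le_mul_of_nonneg_right hcard (Real.rpow_nonneg hlam.le _)
  -- chunk 1
  have hb1 : (∑ l ∈ S1, φ (l : ℝ)) ≤ ∫ x in L..(c : ℝ), φ x := by
    by_cases h1 : a ≤ min b (c - 1)
    · have hm1 : ((min b (c - 1) : ℤ) : ℝ) + 1 ≤ (c : ℝ) := by
        have : min b (c - 1) + 1 ≤ c := by omega
        exact_mod_cast this
      have hmono : MonotoneOn φ (Set.Icc ((a : ℝ)) (((min b (c - 1) : ℤ) : ℝ) + 1)) := by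
        apply (phi_monotoneOn hs0 hs1 hk hlam).mono
        intro x hx
        exact le_trans hx.2 (le_trans hm1 hct0)
      have hsum := sum_le_integral_of_monotoneOn hφc h1 hmono
      refine hsum.trans (intervalIntegral.integral_mono_interval ?_ ?_ ?_
        (Filter.Eventually.of_forall fun x => hφ0 x) (hφc.intervalIntegrable _ _))
      · exact le_trans (min_le_left _ _) (by linarith)
      · have : (a : ℝ) ≤ ((min b (c - 1) : ℤ) : ℝ) := by exact_mod_cast h1
        linarith
      · exact hm1
    · have : S1 = ∅ := by rw [hS1]; exact Finset.Icc_eq_empty h1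
      rw [this, Finset.sum_empty]
      exact intervalIntegral.integral_nonneg hLc fun x _ => hφ0 x
  -- chunk 3
  have hb3 : (∑ l ∈ S3, φ (l : ℝ)) ≤ ∫ x in ((c : ℝ) + 1)..R, φ x := by
    by_cases h3 : max a (c + 2) ≤ b
    · have hm3 : (c : ℝ) + 1 ≤ ((max a (c + 2) : ℤ) : ℝ) - 1 := by
        have h2 : c + 2 ≤ max a (c + 2) := le_max_right _ _
        have h2' : ((c + 2 : ℤ) : ℝ) ≤ ((max a (c + 2) : ℤ) : ℝ) := Int.cast_le.mpr h2
        have he : ((c + 2 : ℤ) : ℝ) = (c : ℝ) + 2 := by push_cast; ring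
        rw [he] at h2'
        linarith
      have hanti : AntitoneOn φ (Set.Icc (((max a (c + 2) : ℤ) : ℝ) - 1) ((b : ℝ))) := by
        apply (phi_antitoneOn hs0 hs1 hk hlam).mono
        intro x hx
        exact le_trans (le_trans ht0c hm3) hx.1
      have hsum := sum_le_integral_of_antitoneOn hφc h3 hanti
      refine hsum.trans (intervalIntegral.integral_mono_interval hm3 ?_ ?_
        (Filter.Eventually.of_forall fun x => hφ0 x) (hφc.intervalIntegrable _ _))
      · have : ((max a (c + 2) : ℤ) : ℝ) ≤ (b : ℝ) := by exact_mod_cast h3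
        linarith
      · exact le_trans (by linarith) (le_max_left ((b : ℝ) + 1) ((c : ℝ) + 1))
    · have : S3 = ∅ := by rw [hS3]; exact Finset.Icc_eq_empty h3
      rw [this, Finset.sum_empty]
      exact intervalIntegral.integral_nonneg hcR fun x _ => hφ0 x
  -- combine integrals
  have hLR : L ≤ R := by linarith
  have hsplit_int : (∫ x in L..(c : ℝ), φ x) + ∫ x in ((c : ℝ) + 1)..R, φ x
      ≤ ∫ x in L..R, φ x := by
    have h1 : (∫ x in L..(c : ℝ), φ x) + ∫ x in (c : ℝ)..((c : ℝ) + 1), φ x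
        = ∫ x in L..((c : ℝ) + 1), φ x :=
      intervalIntegral.integral_add_adjacent_intervals (hφc.intervalIntegrable _ _)
        (hφc.intervalIntegrable _ _)
    have h2 : (∫ x in L..((c : ℝ) + 1), φ x) + ∫ x in ((c : ℝ) + 1)..R, φ x
        = ∫ x in L..R, φ x :=
      intervalIntegral.integral_add_adjacent_intervals (hφc.intervalIntegrable _ _)
        (hφc.intervalIntegrable _ _)
    have h3 : 0 ≤ ∫ x in (c : ℝ)..((c : ℝ) + 1), φ x :=
      intervalIntegral.integral_nonneg (by linarith) fun x _ => hφ0 x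
    linarith
  have hintle : (∫ x in L..R, φ x) ≤ Real.pi / Real.sin (Real.pi * s) * lam ^ (-s) / k :=
    integral_phi_le hs0 hs1 hk hlam hLR
  have htotal : (∑ l ∈ Finset.Icc a b, φ (l : ℝ))
      ≤ Real.pi / Real.sin (Real.pi * s) * lam ^ (-s) / k + 2 * lam ^ (-s) := by
    rw [hsum_eq]
    linarith
  -- final algebra
  have hπ : (0:ℝ) < Real.pi := Real.pi_pos
  have hsin : 0 < Real.sin (Real.pi * s) := by
    apply Real.sin_pos_of_pos_of_lt_pi
    · positivity
    · nlinarith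
  have hcoeff : (0:ℝ) ≤ k * Real.sin (Real.pi * s) / Real.pi := by positivity
  calc (k * Real.sin (Real.pi * s) / Real.pi) * ∑ l ∈ Finset.Icc a b, φ (l : ℝ)
      ≤ (k * Real.sin (Real.pi * s) / Real.pi) *
          (Real.pi / Real.sin (Real.pi * s) * lam ^ (-s) / k + 2 * lam ^ (-s)) :=
        mul_le_mul_of_nonneg_left htotal hcoeff
    _ = (1 + 2 * k * Real.sin (Real.pi * s) / Real.pi) * lam ^ (-s) := by
        field_simp
end

section
/- Let s ∈ (0,1) and k > 0. For s ∈ (0,1), k > 0, and nonnegative integers 𝙼, 𝙽, define the sinc quadrature Q_k^{-s}(λ) := (k·sin(πs)/π) · ∑_{l=−𝙼}^{𝙽} e^{(1−s)kl}/(e^{kl} + λ) for λ > 0. Then for all 0 < λ ≤ Λ one has 0 ≤ Q_k^{-s}(λ) − Q_k^{-s}(Λ) ≤ ((Λ − λ)/Λ) · Q_k^{-s}(λ). -/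
theorem sinc_quadrature_monotone_comparison (s : ℝ) (hs : s ∈ Set.Ioo (0 : ℝ) 1)
    (k : ℝ) (hk : 0 < k) (M N : ℕ)
    (Q : ℝ → ℝ)
    (hQ : ∀ lam : ℝ, Q lam = (k * Real.sin (Real.pi * s) / Real.pi) *
        ∑ l ∈ Finset.Icc (-(M : ℤ)) (N : ℤ),
          Real.exp ((1 - s) * (k * (l : ℝ))) / (Real.exp (k * (l : ℝ)) + lam))
    (lam Lam : ℝ) (hlam : 0 < lam) (hlL : lam ≤ Lam) :
    0 ≤ Q lam - Q Lam ∧ Q lam - Q Lam ≤ ((Lam - lam) / Lam) * Q lam := by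
  obtain ⟨hs0, hs1⟩ := hs
  have hLam : 0 < Lam := lt_of_lt_of_le hlam hlL
  have hsin : 0 < Real.sin (Real.pi * s) := by
    apply Real.sin_pos_of_pos_of_lt_pi
    · positivity
    · nlinarith [Real.pi_pos]
  have hC : 0 ≤ k * Real.sin (Real.pi * s) / Real.pi := by
    have := Real.pi_pos; positivity
  set C := k * Real.sin (Real.pi * s) / Real.pi with hCdef
  rw [hQ lam, hQ Lam, ← mul_sub, ← Finset.sum_sub_distrib]
  constructor
  · apply mul_nonneg hC
    apply Finset.sum_nonneg
    intro l _
    have hE : 0 < Real.exp (k * (l : ℝ)) := Real.exp_pos _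
    have ha : 0 ≤ Real.exp ((1 - s) * (k * (l : ℝ))) := (Real.exp_pos _).le
    have : Real.exp ((1 - s) * (k * (l : ℝ))) / (Real.exp (k * (l : ℝ)) + Lam)
        ≤ Real.exp ((1 - s) * (k * (l : ℝ))) / (Real.exp (k * (l : ℝ)) + lam) := by
      apply div_le_div_of_nonneg_left ha (by linarith) (by linarith)
    linarith
  · have key : (∑ l ∈ Finset.Icc (-(M : ℤ)) (N : ℤ),
        (Real.exp ((1 - s) * (k * (l : ℝ))) / (Real.exp (k * (l : ℝ)) + lam) -
          Real.exp ((1 - s) * (k * (l : ℝ))) / (Real.exp (k * (l : ℝ)) + Lam)))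
        ≤ ((Lam - lam) / Lam) * ∑ l ∈ Finset.Icc (-(M : ℤ)) (N : ℤ),
          Real.exp ((1 - s) * (k * (l : ℝ))) / (Real.exp (k * (l : ℝ)) + lam) := by
      rw [Finset.mul_sum]
      apply Finset.sum_le_sum
      intro l _
      have hE : 0 < Real.exp (k * (l : ℝ)) := Real.exp_pos _
      have ha : 0 < Real.exp ((1 - s) * (k * (l : ℝ))) := Real.exp_pos _
      set a := Real.exp ((1 - s) * (k * (l : ℝ)))
      set E := Real.exp (k * (l : ℝ))
      rw [div_sub_div _ _ (by positivity : (E + lam) ≠ 0) (by positivity : (E + Lam) ≠ 0),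
        div_mul_div_comm, div_le_div_iff₀ (by positivity) (by positivity)]
      nlinarith [mul_nonneg (mul_nonneg (mul_nonneg ha.le (sub_nonneg.2 hlL))
        (by positivity : (0:ℝ) ≤ E + lam)) hE.le]
    calc C * _ ≤ C * (((Lam - lam) / Lam) * ∑ l ∈ Finset.Icc (-(M : ℤ)) (N : ℤ),
          Real.exp ((1 - s) * (k * (l : ℝ))) / (Real.exp (k * (l : ℝ)) + lam)) :=
        mul_le_mul_of_nonneg_left key hC
      _ = _ := by ring
end
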